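/- Let K be a number field, R = 𝓞_K its ring of integers, M₀ a finitely generated torsion-free R-module, ι a finite type, and v : ι → M₀ a realization. If i ∈ ι is a loop (rk({i}) = 0), then the evaluated Tutte polynomial satisfies T̃_{(M₀,v)}(x,y) = y · T̃_{(M₀, v|_{ι∖{i}})}(x,y). -/

import Mathlib

open scoped TensorProduct
open NumberField

/-- The rank of a finite subset `A` of the ground set: the dimension over `K` of the
`K`-span of the images of `v i` (`i ∈ A`) in `M ⊗[𝓞 K] K`. -/
noncomputable def rkFun (K : Type) [Field K] [NumberField K]
    {ι M : Type} [AddCommGroup M] [Module (𝓞 K) M]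
    (v : ι → M) (A : Finset ι) : ℕ :=
  Module.finrank K
    (Submodule.span K ((fun i => (1 : K) ⊗ₜ[𝓞 K] v i) '' (A : Set ι)))

/-- The multiplicity `m(A)`: the cardinality of the torsion submodule of
`M(A) = M ⧸ span (𝓞 K) (v '' A)`. -/
noncomputable def mFun (K : Type) [Field K] [NumberField K]
    {ι M : Type} [AddCommGroup M] [Module (𝓞 K) M]
    (v : ι → M) (A : Finset ι) : ℕ :=
  Nat.card (Submodule.torsion (𝓞 K) (M ⧸ Submodule.span (𝓞 K) (v '' (A : Set ι))))

/-- The evaluated Tutte polynomial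
`T̃(x,y) = Σ_{A ⊆ ι} m(A) (x-1)^(r - rk A) (y-1)^(|A| - rk A) ∈ ℤ[x,y]`,
realized as a multivariate polynomial in the two variables `X 0 = x`, `X 1 = y`. -/
noncomputable def tuttePoly (K : Type) [Field K] [NumberField K]
    {ι M : Type} [Fintype ι] [AddCommGroup M] [Module (𝓞 K) M]
    (v : ι → M) : MvPolynomial (Fin 2) ℤ :=
  ∑ A : Finset ι,
    (mFun K v A : MvPolynomial (Fin 2) ℤ) *
      (MvPolynomial.X 0 - 1) ^ (rkFun K v Finset.univ - rkFun K v A) *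
      (MvPolynomial.X 1 - 1) ^ (A.card - rkFun K v A)

section Aux

variable (K : Type) [Field K] [NumberField K]
    {ι κ M : Type} [AddCommGroup M] [Module (𝓞 K) M]

lemma mFun_eq_of_span_eq {v : ι → M} {w : κ → M} {A : Finset ι} {B : Finset κ}
    (h : Submodule.span (𝓞 K) (v '' (A : Set ι)) =
      Submodule.span (𝓞 K) (w '' (B : Set κ))) :
    mFun K v A = mFun K w B := by
  unfold mFun
  rw [h]

lemma rkFun_eq_of_span_eq {v : ι → M} {w : κ → M} {A : Finset ι} {B : Finset κ}
    (h : Submodule.span K ((fun i => (1 : K) ⊗ₜ[𝓞 K] v i) '' (A : Set ι)) =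
      Submodule.span K ((fun i => (1 : K) ⊗ₜ[𝓞 K] w i) '' (B : Set κ))) :
    rkFun K v A = rkFun K w B := by
  unfold rkFun
  rw [h]

lemma rkFun_le_card (v : ι → M) (A : Finset ι) : rkFun K v A ≤ A.card := by
  classical
  unfold rkFun
  rw [← Finset.coe_image]
  exact le_trans (finrank_span_finset_le_card _) Finset.card_image_le

end Aux

/-- if `M₀` is torsion-free and `i` is a loop (`rk {i} = 0`), then
`T̃_{(M₀,v)}(x,y) = y · T̃_{(M₀, v restricted to ι∖{i})}(x,y)`. -/
theorem tuttePoly_loop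
    (K : Type) [Field K] [NumberField K]
    (ι : Type) [Fintype ι] [DecidableEq ι]
    (M₀ : Type) [AddCommGroup M₀] [Module (𝓞 K) M₀] [Module.Finite (𝓞 K) M₀]
    (htf : Submodule.torsion (𝓞 K) M₀ = ⊥)
    (v : ι → M₀) (i : ι)
    (hloop : rkFun K v {i} = 0) :
    tuttePoly K v =
      MvPolynomial.X 1 * tuttePoly K (fun j : {j : ι // j ≠ i} => v (j : ι)) := by
  classical
  set R := 𝓞 K
  set w : {j : ι // j ≠ i} → M₀ := fun j => v (j : ι) with hw
  set emb : {j : ι // j ≠ i} ↪ ι := Function.Embedding.subtype _ with hemb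
  -- `1 ⊗ v i = 0`
  have h10 : (1 : K) ⊗ₜ[R] v i = 0 := by
    by_contra h
    have : rkFun K v {i} = 1 := by
      unfold rkFun
      rw [Finset.coe_singleton, Set.image_singleton]
      exact finrank_span_singleton h
    omega
  -- `v i = 0`
  have hvi : v i = 0 := by
    have hbc : IsLocalizedModule (nonZeroDivisors R) (TensorProduct.mk R K M₀ 1) :=
      (isLocalizedModule_iff_isBaseChange (nonZeroDivisors R) K _).mpr
        (TensorProduct.isBaseChange _ _ _)
    obtain ⟨s, hs⟩ :=
      (IsLocalizedModule.eq_zero_iff (nonZeroDivisors R) (TensorProduct.mk R K M₀ 1)).mp h10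
    have : v i ∈ Submodule.torsion R M₀ := ⟨s, hs⟩
    rw [htf] at this
    simpa using this
  -- image identities
  have himg : ∀ B : Finset {j : ι // j ≠ i},
      v '' ((B.map emb : Finset ι) : Set ι) = w '' (B : Set _) := by
    intro B
    rw [Finset.coe_map, Set.image_image]
    rfl
  have himgK : ∀ B : Finset {j : ι // j ≠ i},
      (fun k => (1 : K) ⊗ₜ[R] v k) '' ((B.map emb : Finset ι) : Set ι) =
        (fun k => (1 : K) ⊗ₜ[R] w k) '' (B : Set _) := by
    intro B
    rw [Finset.coe_map, Set.image_image]
    rfl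
  have hnotmem : ∀ B : Finset {j : ι // j ≠ i}, i ∉ B.map emb := by
    intro B hmem
    obtain ⟨a, _, ha⟩ := Finset.mem_map.mp hmem
    exact a.2 ha
  -- m and rk identities
  have key_m : ∀ B : Finset {j : ι // j ≠ i}, mFun K v (B.map emb) = mFun K w B := by
    intro B
    exact mFun_eq_of_span_eq K (by rw [himg B])
  have key_rk : ∀ B : Finset {j : ι // j ≠ i}, rkFun K v (B.map emb) = rkFun K w B := by
    intro B
    exact rkFun_eq_of_span_eq K (by rw [himgK B])
  have key_mi : ∀ B : Finset {j : ι // j ≠ i},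
      mFun K v (insert i (B.map emb)) = mFun K w B := by
    intro B
    refine mFun_eq_of_span_eq K ?_
    rw [Finset.coe_insert, Set.image_insert_eq, hvi, Submodule.span_insert_zero, himg B]
  have key_rki : ∀ B : Finset {j : ι // j ≠ i},
      rkFun K v (insert i (B.map emb)) = rkFun K w B := by
    intro B
    refine rkFun_eq_of_span_eq K ?_
    rw [Finset.coe_insert, Set.image_insert_eq, h10, Submodule.span_insert_zero, himgK B]
  -- total rank
  have huniv : (Finset.univ : Finset ι) =
      insert i ((Finset.univ : Finset {j : ι // j ≠ i}).map emb) := by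
    ext j
    constructor
    · intro _
      by_cases hj : j = i
      · exact Finset.mem_insert.mpr (Or.inl hj)
      · exact Finset.mem_insert.mpr
          (Or.inr (Finset.mem_map.mpr ⟨⟨j, hj⟩, Finset.mem_univ _, rfl⟩))
    · intro _
      exact Finset.mem_univ _
  have hrtot : rkFun K v Finset.univ = rkFun K w Finset.univ := by
    rw [huniv]; exact key_rki _
  -- the equiv
  let e : Finset {j : ι // j ≠ i} × Bool ≃ Finset ι :=
    { toFun := fun p => if p.2 then insert i (p.1.map emb) else p.1.map emb
      invFun := fun A => (A.subtype _, decide (i ∈ A))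
      left_inv := by
        rintro ⟨B, b⟩
        have hne : ∀ x ∈ B.map emb, x ≠ i := fun x hx hxi => hnotmem B (hxi ▸ hx)
        have hsub : ∀ C : Finset ι, C.subtype (fun j => j ≠ i) = B ↔
            (C.subtype (fun j => j ≠ i)).map emb = B.map emb := by
          intro C
          exact ⟨fun h => h ▸ rfl, fun h => Finset.map_injective emb h⟩
        have hBsub : (B.map emb).subtype (fun j => j ≠ i) = B := by
          rw [hsub, Finset.subtype_map, Finset.filter_true_of_mem hne]
        cases b with
        | false =>
          refine Prod.ext ?_ ?_
          · show ((Finset.map emb B).subtype fun j => j ≠ i) = B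
            exact hBsub
          · show decide (i ∈ Finset.map emb B) = false
            simpa using hnotmem B
        | true =>
          refine Prod.ext ?_ ?_
          · show ((insert i (Finset.map emb B)).subtype fun j => j ≠ i) = B
            rw [hsub, Finset.subtype_map, Finset.filter_insert, if_neg (by simp),
              Finset.filter_true_of_mem hne]
          · show decide (i ∈ insert i (Finset.map emb B)) = true
            simp
      right_inv := by
        intro A
        have hsm : (A.subtype fun j => j ≠ i).map emb = A.filter (fun j => j ≠ i) :=
          Finset.subtype_map _
        by_cases hi : i ∈ A
        · simp only [hsm, Finset.filter_ne', hi, decide_true, if_true]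
          exact Finset.insert_erase hi
        · simp only [hsm, Finset.filter_ne', hi, decide_false, Bool.false_eq_true, if_false]
          exact Finset.erase_eq_of_notMem hi }
  -- now the computation
  rw [tuttePoly, tuttePoly, ← Equiv.sum_comp e
    (fun A : Finset ι =>
      (mFun K v A : MvPolynomial (Fin 2) ℤ) *
        (MvPolynomial.X 0 - 1) ^ (rkFun K v Finset.univ - rkFun K v A) *
        (MvPolynomial.X 1 - 1) ^ (A.card - rkFun K v A)),
    Fintype.sum_prod_type, Finset.mul_sum]
  refine Finset.sum_congr rfl fun B _ => ?_
  have hcard : (insert i (B.map emb)).card = B.card + 1 := by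
    rw [Finset.card_insert_of_notMem (hnotmem B), Finset.card_map]
  have hrkle : rkFun K w B ≤ B.card := rkFun_le_card K w B
  rw [Fintype.sum_bool]
  show (mFun K v (insert i (B.map emb)) : MvPolynomial (Fin 2) ℤ) *
        (MvPolynomial.X 0 - 1) ^ (rkFun K v Finset.univ - rkFun K v (insert i (B.map emb))) *
        (MvPolynomial.X 1 - 1) ^ ((insert i (B.map emb)).card - rkFun K v (insert i (B.map emb)))
      + (mFun K v (B.map emb) : MvPolynomial (Fin 2) ℤ) *
        (MvPolynomial.X 0 - 1) ^ (rkFun K v Finset.univ - rkFun K v (B.map emb)) *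
        (MvPolynomial.X 1 - 1) ^ ((B.map emb).card - rkFun K v (B.map emb))
      = _
  rw [key_mi, key_rki, key_m, key_rk, hcard, Finset.card_map, hrtot,
    show B.card + 1 - rkFun K w B = (B.card - rkFun K w B) + 1 by omega,
    pow_succ]
  ring
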